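/- Let K ⊆ ℝ^d be compact with nonempty interior and r > 0. If A ⊆ K is a nonempty closed set with reach(A) ≥ r, then the Lebesgue measure of ∂A is zero: μ(∂A) = 0. -/

import Mathlib

open Metric Set MeasureTheory
open scoped RealInnerProductSpace ENNReal

/-- `reach(S) ≥ r`: every point at distance `< r` from `S` has a unique nearest point
in `S`. -/
def ReachGe {d : ℕ} (S : Set (EuclideanSpace ℝ (Fin d))) (r : ℝ) : Prop :=
  ∀ x : EuclideanSpace ℝ (Fin d), Metric.infDist x S < r →
    ∃! y, y ∈ S ∧ dist x y = Metric.infDist x S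

lemma porosity_of_reachGe {d : ℕ} {A : Set (EuclideanSpace ℝ (Fin d))} {r : ℝ}
    (hr : 0 < r) (hA : A.Nonempty) (hAc : IsClosed A) (hAcomp : IsCompact A)
    (hreach : ReachGe A r) {x : EuclideanSpace ℝ (Fin d)} (hx : x ∈ frontier A)
    {ρ : ℝ} (hρ : 0 < ρ) (hρr : ρ < r) :
    ∃ w, dist w x ≤ ρ/2 ∧ ρ/8 ≤ Metric.infDist w A := by
  by_contra hcon
  push_neg at hcon
  -- x is a limit of points of Aᶜ
  have hxc : x ∈ closure Aᶜ := by
    have := hx; rw [frontier_eq_closure_inter_closure] at this; exact this.2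
  obtain ⟨z₀, hz₀c, hz₀d⟩ : ∃ z₀ ∈ Aᶜ, dist x z₀ < ρ/100 :=
    Metric.mem_closure_iff.1 hxc (ρ/100) (by positivity)
  have hz₀pos : 0 < Metric.infDist z₀ A := (hAc.notMem_iff_infDist_pos hA).1 hz₀c
  set G : EuclideanSpace ℝ (Fin d) → ℝ :=
    fun w => Metric.infDist w A - dist w z₀ / 2 with hG
  have contG : Continuous G :=
    (continuous_infDist_pt A).sub ((continuous_id.dist continuous_const).div_const 2)
  have hz₀B : z₀ ∈ closedBall x (ρ/2) := by
    rw [mem_closedBall, dist_comm]; linarith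
  obtain ⟨w, hwB, hwmax⟩ :=
    (isCompact_closedBall x (ρ/2)).exists_isMaxOn ⟨z₀, hz₀B⟩ contG.continuousOn
  set s := Metric.infDist w A with hsdef
  have hwxB : dist w x ≤ ρ/2 := mem_closedBall.1 hwB
  have hGz₀ : G z₀ = Metric.infDist z₀ A := by simp [hG]
  have hGw : G z₀ ≤ G w := hwmax hz₀B
  have hs : 0 < s := by
    have h1 : G w ≤ s := by
      simp only [hG]
      have : 0 ≤ dist w z₀ / 2 := by positivity
      linarith
    linarith [hGw, hGz₀ ▸ hz₀pos]
  have hwz₀ : dist w z₀ < 2 * s := by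
    have : 0 < G w := by linarith [hGz₀ ▸ hz₀pos, hGw]
    simp only [hG] at this; linarith
  have hsmall : s < ρ/8 := hcon w hwxB
  have hwx : dist w x < ρ/2 := by
    calc dist w x ≤ dist w z₀ + dist z₀ x := dist_triangle _ _ _
    _ < 2*s + ρ/100 := by rw [dist_comm z₀ x]; linarith
    _ < ρ/2 := by linarith
  -- unique nearest point p
  obtain ⟨p, ⟨hpA, hpd⟩, hpuniq⟩ := hreach w (by linarith : Metric.infDist w A < r)
  set u := (s⁻¹ : ℝ) • (w - p) with hu
  have hwp : ‖w - p‖ = s := by rw [← dist_eq_norm]; exact hpd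
  have hnu : ‖u‖ = 1 := by
    rw [hu, norm_smul, hwp, Real.norm_eq_abs, abs_of_pos (inv_pos.2 hs), inv_mul_cancel₀ hs.ne']
  have huu : ⟪u, u⟫ = 1 := by
    rw [real_inner_self_eq_norm_sq, hnu]; norm_num
  have hup : ⟪u, w - p⟫ = s := by
    rw [hu, real_inner_smul_left, real_inner_self_eq_norm_sq, hwp]
    field_simp
  -- the moved points
  set δ := min (ρ/2 - dist w x) s with hδdef
  have hδ : 0 < δ := lt_min (by linarith) hs
  set h : ℕ → ℝ := fun n => δ / (n+1) with hh
  have hhpos : ∀ n, 0 < h n := fun n => by positivity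
  have hhδ : ∀ n, h n ≤ δ := fun n => by
    rw [hh]
    exact div_le_self hδ.le (by push_cast; linarith [Nat.cast_nonneg (α := ℝ) n])
  set wseq : ℕ → EuclideanSpace ℝ (Fin d) := fun n => w + h n • u with hwseq
  have hdistw : ∀ n, dist (wseq n) w = h n := by
    intro n
    rw [hwseq]
    simp only [dist_eq_norm, add_sub_cancel_left, norm_smul, hnu, Real.norm_eq_abs,
      abs_of_pos (hhpos n), mul_one]
  have hwseqB : ∀ n, wseq n ∈ closedBall x (ρ/2) := by
    intro n
    rw [mem_closedBall]
    calc dist (wseq n) x ≤ dist (wseq n) w + dist w x := dist_triangle _ _ _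
    _ ≤ δ + dist w x := by linarith [hdistw n, hhδ n]
    _ ≤ ρ/2 := by have := min_le_left (ρ/2 - dist w x) s; linarith [hδdef ▸ this]
  have hinfseq : ∀ n, Metric.infDist (wseq n) A ≤ s + h n / 2 := by
    intro n
    have h1 : G (wseq n) ≤ G w := hwmax (hwseqB n)
    have h2 : dist (wseq n) z₀ ≤ dist w z₀ + h n := by
      rw [dist_comm (wseq n) z₀, dist_comm w z₀]
      linarith [dist_triangle z₀ w (wseq n), hdistw n, dist_comm (wseq n) w]
    simp only [hG] at h1
    linarith
  -- nearest points of the moved points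
  have hqex : ∀ n, ∃ y ∈ A, Metric.infDist (wseq n) A = dist (wseq n) y :=
    fun n => hAcomp.exists_infDist_eq_dist hA _
  choose q hqA hqd using hqex
  have hqdist : ∀ n, dist (wseq n) (q n) ≤ s + h n / 2 :=
    fun n => (hqd n) ▸ hinfseq n
  -- key inner product bound
  have hkey : ∀ n, ⟪u, w - q n⟫ ≤ s / 2 := by
    intro n
    have hlow : s ≤ dist w (q n) := Metric.infDist_le_dist_of_mem (hqA n)
    have hexp : dist w (q n) ^ 2
        = ‖wseq n - q n‖ ^ 2 - 2 * (h n * ⟪u, wseq n - q n⟫) + (h n)^2 := by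
      have hwq : w - q n = (wseq n - q n) - h n • u := by
        rw [hwseq]; module
      rw [dist_eq_norm, hwq, norm_sub_sq_real, real_inner_smul_right, norm_smul,
        Real.norm_eq_abs, abs_of_pos (hhpos n), hnu, mul_one, real_inner_comm]
      try ring
    have hiq : ⟪u, wseq n - q n⟫ = ⟪u, w - q n⟫ + h n := by
      have : wseq n - q n = (w - q n) + h n • u := by rw [hwseq]; module
      rw [this, inner_add_right, real_inner_smul_right, huu]; ring
    have hnq : ‖wseq n - q n‖ ≤ s + h n / 2 := by
      rw [← dist_eq_norm]; exact hqdist n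
    have hnq0 : 0 ≤ ‖wseq n - q n‖ := norm_nonneg _
    have h2 : s^2 ≤ dist w (q n) ^ 2 := pow_le_pow_left₀ hs.le hlow 2
    have h3 : ‖wseq n - q n‖^2 ≤ (s + h n / 2)^2 := pow_le_pow_left₀ hnq0 hnq 2
    have hn := hhpos n
    rw [hexp, hiq] at h2
    nlinarith
  -- extract a convergent subsequence
  obtain ⟨qq, hqqA, φ, hφ, hconv⟩ := hAcomp.tendsto_subseq hqA
  have hhlim : Filter.Tendsto (fun n => h (φ n)) Filter.atTop (nhds 0) := by
    have h1 : Filter.Tendsto h Filter.atTop (nhds 0) := by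
      have h0 := tendsto_one_div_add_atTop_nhds_zero_nat (𝕜 := ℝ)
      have h2 := h0.const_mul δ
      simpa [hh, mul_one_div, div_eq_mul_inv] using h2
    exact h1.comp hφ.tendsto_atTop
  have hdq : Filter.Tendsto (fun n => dist w (q (φ n))) Filter.atTop (nhds (dist w qq)) :=
    Filter.Tendsto.dist tendsto_const_nhds hconv
  have hrhs : Filter.Tendsto (fun n => s + (3/2) * h (φ n)) Filter.atTop (nhds s) := by
    have := (hhlim.const_mul (3/2 : ℝ)).const_add s
    simpa using this
  have hqqclose : dist w qq ≤ s := by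
    refine le_of_tendsto_of_tendsto' hdq hrhs fun n => ?_
    calc dist w (q (φ n)) ≤ dist w (wseq (φ n)) + dist (wseq (φ n)) (q (φ n)) :=
          dist_triangle _ _ _
    _ ≤ h (φ n) + (s + h (φ n) / 2) := by
        have h1 := hdistw (φ n); have h2 := hqdist (φ n)
        rw [dist_comm w (wseq (φ n))]
        linarith
    _ = s + (3/2) * h (φ n) := by ring
  have hqqd : dist w qq = s :=
    le_antisymm hqqclose (Metric.infDist_le_dist_of_mem hqqA)
  have hqqp : qq = p := hpuniq qq ⟨hqqA, hqqd⟩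
  have hinner_lim : Filter.Tendsto (fun n => ⟪u, w - q (φ n)⟫) Filter.atTop
      (nhds ⟪u, w - qq⟫) :=
    Filter.Tendsto.inner tendsto_const_nhds (tendsto_const_nhds.sub hconv)
  have hfinal : ⟪u, w - qq⟫ ≤ s / 2 :=
    le_of_tendsto hinner_lim (Filter.Eventually.of_forall fun n => hkey (φ n))
  rw [hqqp, hup] at hfinal
  linarith

theorem frontier_null_of_positive_reach {d : ℕ}
    {K A : Set (EuclideanSpace ℝ (Fin d))} {r : ℝ}
    (hK : IsCompact K) (hKint : (interior K).Nonempty)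
    (hr : 0 < r) (hAK : A ⊆ K) (hA : A.Nonempty) (hAc : IsClosed A)
    (hreach : ReachGe A r) :
    volume (frontier A) = 0 := by
  by_contra hF0
  have hAcomp : IsCompact A := hK.of_isClosed_subset hAc hAK
  have hFmeas : MeasurableSet (frontier A) := isClosed_frontier.measurableSet
  set μ : Measure (EuclideanSpace ℝ (Fin d)) := volume with hμ
  have hres : μ.restrict (frontier A) ≠ 0 := by
    rw [Ne, Measure.restrict_eq_zero]; exact hF0
  haveI : Filter.NeBot (ae (μ.restrict (frontier A))) := ae_neBot.2 hres
  have hae := (Besicovitch.ae_tendsto_measure_inter_div μ (frontier A)).and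
    (ae_restrict_mem hFmeas)
  obtain ⟨x, hxd, hxF⟩ := hae.exists
  set n := Module.finrank ℝ (EuclideanSpace ℝ (Fin d)) with hn
  set c : ℝ≥0∞ := ENNReal.ofReal ((8:ℝ)⁻¹ ^ n) with hc
  have hc0 : c ≠ 0 := by
    rw [hc, Ne, ENNReal.ofReal_eq_zero, not_le]; positivity
  have hcne : c ≠ ∞ := ENNReal.ofReal_ne_top
  -- the ratio bound at every scale ρ ∈ (0, r)
  have hratio : ∀ ρ : ℝ, 0 < ρ → ρ < r →
      μ (frontier A ∩ closedBall x ρ) / μ (closedBall x ρ) ≤ 1 - c := by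
    intro ρ hρ hρr
    obtain ⟨w, hw1, hw2⟩ := porosity_of_reachGe hr hA hAc hAcomp hreach hxF hρ hρr
    have hballA : Disjoint (frontier A ∩ closedBall x ρ) (ball w (ρ/8)) := by
      refine Set.disjoint_left.2 fun y hy hyb => ?_
      have h1 : Metric.infDist w A ≤ dist w y :=
        Metric.infDist_le_dist_of_mem (hAc.frontier_subset hy.1)
      have h2 : dist w y < ρ/8 := mem_ball'.1 hyb
      linarith
    have hsub : ball w (ρ/8) ⊆ closedBall x ρ := fun y hy => by
      rw [mem_closedBall]
      have h1 : dist y w < ρ/8 := mem_ball.1 hy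
      calc dist y x ≤ dist y w + dist w x := dist_triangle _ _ _
      _ ≤ ρ := by linarith
    have hvol : μ (ball w (ρ/8)) = c * μ (closedBall x ρ) := by
      rw [Measure.addHaar_ball_of_pos μ w (by positivity : (0:ℝ) < ρ/8),
        Measure.addHaar_closedBall μ x hρ.le, hc, ← hn, ← mul_assoc,
        ← ENNReal.ofReal_mul (by positivity), ← mul_pow]
      congr 2
      ring
    have hle : μ (frontier A ∩ closedBall x ρ) + c * μ (closedBall x ρ)
        ≤ μ (closedBall x ρ) := by
      rw [← hvol, ← measure_union hballA measurableSet_ball]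
      exact measure_mono (union_subset inter_subset_right hsub)
    have h0 : μ (closedBall x ρ) ≠ 0 := (measure_closedBall_pos μ x hρ).ne'
    have htop : μ (closedBall x ρ) ≠ ∞ := measure_closedBall_lt_top.ne
    refine ENNReal.le_sub_of_add_le_right hcne ?_
    have := ENNReal.div_le_div_right hle (μ (closedBall x ρ))
    rw [← ENNReal.div_add_div_same] at this
    calc μ (frontier A ∩ closedBall x ρ) / μ (closedBall x ρ) + c
        = μ (frontier A ∩ closedBall x ρ) / μ (closedBall x ρ)
          + c * μ (closedBall x ρ) / μ (closedBall x ρ) := by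
          rw [mul_div_assoc, ENNReal.div_self h0 htop, mul_one]
      _ ≤ μ (closedBall x ρ) / μ (closedBall x ρ) := this
      _ = 1 := ENNReal.div_self h0 htop
  -- contradiction with density 1
  have h1c : (1:ℝ≥0∞) - c < 1 := ENNReal.sub_lt_self ENNReal.one_ne_top one_ne_zero hc0
  have hev1 : ∀ᶠ ρ in nhdsWithin 0 (Ioi (0:ℝ)),
      1 - c < μ (frontier A ∩ closedBall x ρ) / μ (closedBall x ρ) :=
    hxd.eventually (eventually_gt_nhds h1c)
  have hev2 : ∀ᶠ ρ in nhdsWithin 0 (Ioi (0:ℝ)), ρ ∈ Ioo (0:ℝ) r :=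
    Ioo_mem_nhdsGT_of_mem (by constructor <;> simp [hr])
  obtain ⟨ρ, h1, h2⟩ := (hev1.and hev2).exists
  exact absurd (hratio ρ h2.1 h2.2) (not_le.2 h1)
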